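/- The total chromatic number of the circulant graph C_7(1,3) equals 6. -/

import Mathlib

/-- The circulant graph `C_n(1,3)`: vertices are `ZMod n`, and `i` is adjacent to `j`
iff `i - j ≡ ±1` or `±3 (mod n)`. -/
def circulantGraph (n : ℕ) : SimpleGraph (ZMod n) :=
  SimpleGraph.fromRel (fun i j => j - i = 1 ∨ j - i = 3)

/-- `vc` (on vertices) and `ec` (on edges) form a total `k`-colouring of `G`:
adjacent vertices get distinct colours, adjacent (distinct, incident) edges get distinct
colours, and each vertex gets a colour distinct from those of its incident edges. -/
def IsTotalColoring {V : Type*} (G : SimpleGraph V) (k : ℕ)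
    (vc : V → Fin k) (ec : Sym2 V → Fin k) : Prop :=
  (∀ v w : V, G.Adj v w → vc v ≠ vc w) ∧
  (∀ e₁ ∈ G.edgeSet, ∀ e₂ ∈ G.edgeSet, e₁ ≠ e₂ → (∃ v, v ∈ e₁ ∧ v ∈ e₂) → ec e₁ ≠ ec e₂) ∧
  (∀ v : V, ∀ e ∈ G.edgeSet, v ∈ e → vc v ≠ ec e)

/-- `G` has a total `k`-colouring. -/
def HasTotalColoring {V : Type*} (G : SimpleGraph V) (k : ℕ) : Prop :=
  ∃ vc ec, IsTotalColoring G k vc ec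

/-- The total chromatic number of `G`: the least `k` admitting a total `k`-colouring. -/
noncomputable def totalChromaticNumber {V : Type*} (G : SimpleGraph V) : ℕ :=
  sInf {k : ℕ | HasTotalColoring G k}

instance : DecidableRel (circulantGraph 7).Adj := fun a b =>
  decidable_of_iff (a ≠ b ∧ (((b - a = 1 ∨ b - a = 3)) ∨ ((a - b = 1 ∨ a - b = 3)))) Iff.rfl

/-- vertex colouring -/
def vc7 : ZMod 7 → Fin 6 := fun v =>
  match v.val with
  | 0 => 0 | 1 => 1 | 2 => 0 | 3 => 1 | 4 => 2 | 5 => 3 | _ => 2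

def etbl : ℕ → ℕ → Fin 6
  | 0, 1 => 2 | 0, 3 => 3 | 0, 4 => 1 | 0, 6 => 4
  | 1, 2 => 3 | 1, 4 => 0 | 1, 5 => 5
  | 2, 3 => 4 | 2, 5 => 2 | 2, 6 => 5
  | 3, 4 => 5 | 3, 6 => 0
  | 4, 5 => 4 | 5, 6 => 1
  | _, _ => 0

def ec7 : Sym2 (ZMod 7) → Fin 6 :=
  Sym2.lift ⟨fun i j => etbl (min i.val j.val) (max i.val j.val), by
    intro a b
    simp [Nat.min_comm, Nat.max_comm]⟩

lemma upper : HasTotalColoring (circulantGraph 7) 6 := by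
  exact ⟨vc7, ec7, by decide, by decide, by decide⟩

set_option maxRecDepth 10000 in
lemma indep_le_two : ∀ s : Finset (ZMod 7),
    (∀ v ∈ s, ∀ w ∈ s, ¬ (circulantGraph 7).Adj v w) → s.card ≤ 2 := by decide

set_option maxRecDepth 10000 in
lemma edge_card_two : ∀ e ∈ (circulantGraph 7).edgeFinset,
    (Finset.univ.filter (fun v => v ∈ e)).card = 2 := by decide

lemma no5 : ¬ HasTotalColoring (circulantGraph 7) 5 := by
  rintro ⟨vc, ec, hv, he, hve⟩
  set G := circulantGraph 7 with hG
  set A : Fin 5 → Finset (ZMod 7) :=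
    fun c => Finset.univ.filter (fun v => vc v = c) with hA
  set B : Fin 5 → Finset (Sym2 (ZMod 7)) :=
    fun c => G.edgeFinset.filter (fun e => ec e = c) with hB
  have hAle : ∀ c, (A c).card ≤ 2 := by
    intro c
    apply indep_le_two
    intro v hv' w hw' hadj
    simp only [hA, Finset.mem_filter] at hv' hw'
    exact hv v w hadj (hv'.2.trans hw'.2.symm)
  have hstep : ∀ c, ∀ v : ZMod 7,
      (if vc v = c then 1 else 0) + ((B c).filter (fun e => v ∈ e)).card ≤ 1 := by
    intro c v
    by_cases h : vc v = c
    · have hempty : ((B c).filter (fun e => v ∈ e)).card = 0 := by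
        rw [Finset.card_eq_zero, Finset.eq_empty_iff_forall_notMem]
        intro e hemem
        simp only [hB, Finset.mem_filter, SimpleGraph.mem_edgeFinset] at hemem
        exact hve v e hemem.1.1 hemem.2 (h.trans hemem.1.2.symm)
      simp [h, hempty]
    · simp only [h, if_false, Nat.zero_add]
      rw [Finset.card_le_one]
      intro e₁ h₁ e₂ h₂
      simp only [hB, Finset.mem_filter, SimpleGraph.mem_edgeFinset] at h₁ h₂
      by_contra hne
      exact he e₁ h₁.1.1 e₂ h₂.1.1 hne ⟨v, h₁.2, h₂.2⟩
        (h₁.1.2.trans h₂.1.2.symm)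
  have hABle : ∀ c, (A c).card + 2 * (B c).card ≤ 7 := by
    intro c
    have hsum : ∑ v : ZMod 7,
        ((if vc v = c then 1 else 0) + ((B c).filter (fun e => v ∈ e)).card) ≤ 7 := by
      calc ∑ v : ZMod 7, ((if vc v = c then 1 else 0)
            + ((B c).filter (fun e => v ∈ e)).card)
          ≤ ∑ _v : ZMod 7, 1 := Finset.sum_le_sum (fun v _ => hstep c v)
        _ = 7 := by simp
    have h1 : ∑ v : ZMod 7, (if vc v = c then 1 else 0) = (A c).card := by
      rw [hA, Finset.card_filter]
    have h2 : ∑ v : ZMod 7, ((B c).filter (fun e => v ∈ e)).card = 2 * (B c).card := by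
      have : ∑ v : ZMod 7, ((B c).filter (fun e => v ∈ e)).card
          = ∑ e ∈ B c, (Finset.univ.filter (fun v => v ∈ e)).card := by
        simp only [Finset.card_filter]
        rw [Finset.sum_comm]
      rw [this]
      rw [Finset.sum_congr rfl (fun e hemem => edge_card_two e
        (Finset.mem_of_mem_filter e hemem))]
      simp [Nat.mul_comm]
      rfl
    rw [Finset.sum_add_distrib, h1, h2] at hsum
    exact hsum
  have hkey : ∀ c, (A c).card + (B c).card ≤ 4 := by
    intro c
    have := hAle c
    have := hABle c
    omega
  have h7 : ∑ c : Fin 5, (A c).card = 7 := by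
    have := Finset.card_eq_sum_card_fiberwise
      (f := vc) (s := (Finset.univ : Finset (ZMod 7))) (t := Finset.univ)
      (fun x _ => Finset.mem_univ _)
    simpa [hA] using this.symm
  have h14 : ∑ c : Fin 5, (B c).card = 14 := by
    have := Finset.card_eq_sum_card_fiberwise
      (f := ec) (s := G.edgeFinset) (t := (Finset.univ : Finset (Fin 5)))
      (fun x _ => Finset.mem_univ _)
    have hcard : G.edgeFinset.card = 14 := by decide
    rw [hcard] at this
    simpa [hB] using this.symm
  have : (21 : ℕ) ≤ 20 := by
    calc (21 : ℕ) = 7 + 14 := rfl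
      _ = ∑ c : Fin 5, (A c).card + ∑ c : Fin 5, (B c).card := by rw [h7, h14]
      _ = ∑ c : Fin 5, ((A c).card + (B c).card) := Finset.sum_add_distrib.symm
      _ ≤ ∑ _c : Fin 5, 4 := Finset.sum_le_sum (fun c _ => hkey c)
      _ = 20 := by simp
  omega

lemma mono {V : Type*} (G : SimpleGraph V) {k m : ℕ} (h : k ≤ m)
    (hk : HasTotalColoring G k) : HasTotalColoring G m := by
  obtain ⟨vc, ec, h1, h2, h3⟩ := hk
  refine ⟨Fin.castLE h ∘ vc, Fin.castLE h ∘ ec, ?_, ?_, ?_⟩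
  · intro v w hadj
    exact fun hEq => h1 v w hadj (Fin.castLE_injective h hEq)
  · intro e₁ he₁ e₂ he₂ hne hsh
    exact fun hEq => h2 e₁ he₁ e₂ he₂ hne hsh (Fin.castLE_injective h hEq)
  · intro v e hemem hvmem
    exact fun hEq => h3 v e hemem hvmem (Fin.castLE_injective h hEq)

theorem total_chromatic_number_circulant_7 :
    totalChromaticNumber (circulantGraph 7) = 6 := by
  unfold totalChromaticNumber
  apply le_antisymm
  · exact Nat.sInf_le (show (6:ℕ) ∈ {k : ℕ | HasTotalColoring (circulantGraph 7) k} from upper)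
  · apply le_csInf ⟨6, show (6:ℕ) ∈ {k : ℕ | HasTotalColoring (circulantGraph 7) k} from upper⟩
    intro k hk
    by_contra hlt
    push_neg at hlt
    exact no5 (mono _ (by omega) hk)
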